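/- Let A be an N×N reaction matrix with strongly connected graph, X_∞ > 0 with A X_∞ = 0, and let X(t) solve X' = A X with ∑_i u_i(0) = ∑_i u_{i,∞}. Then with E(X - X_∞ | X_∞) = ∑_i (u_i - u_{i,∞})²/u_{i,∞}, there exists λ > 0 such that E(X(t) - X_∞ | X_∞) ≤ e^{-λ t} E(X(0) - X_∞ | X_∞) for all t ≥ 0; in particular X(t) → X_∞ exponentially fast. -/

import Mathlib

lemma dissipation_identity (N : ℕ) (A : Matrix (Fin N) (Fin N) ℝ) (w : Fin N → ℝ)
    (hw : ∀ i, w i ≠ 0)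
    (hrow : ∀ i, ∑ j, A i j * w j = 0) (hcol : ∀ j, ∑ i, A i j = 0)
    (y : Fin N → ℝ) :
    ∑ i, 2 * y i * (∑ j, A i j * y j) / w i
      = -∑ i, ∑ j, (A i j * w j) * (y i / w i - y j / w j) ^ 2 := by
  have key : ∀ i j, (A i j * w j) * (y i / w i - y j / w j) ^ 2
      = A i j * w j * (y i / w i) ^ 2 - 2 * (A i j * y i * y j / w i)
        + A i j * (y j ^ 2 / w j) := by
    intro i j
    have hi := hw i; have hj := hw j
    field_simp
    ring
  have h1 : ∀ i, ∑ j, A i j * w j * (y i / w i) ^ 2 = 0 := by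
    intro i
    rw [← Finset.sum_mul, hrow, zero_mul]
  have h2 : ∑ i, ∑ j, A i j * (y j ^ 2 / w j) = 0 := by
    rw [Finset.sum_comm]
    refine Finset.sum_eq_zero fun j _ => ?_
    rw [← Finset.sum_mul, hcol, zero_mul]
  have lhs : ∀ i, 2 * y i * (∑ j, A i j * y j) / w i
      = ∑ j, 2 * (A i j * y i * y j / w i) := by
    intro i
    rw [div_eq_mul_inv, show (2 * y i * ∑ j, A i j * y j) = ∑ j, 2 * y i * (A i j * y j) from
      by rw [Finset.mul_sum], Finset.sum_mul]
    refine Finset.sum_congr rfl fun j _ => ?_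
    have hi := hw i
    field_simp
  simp only [key, Finset.sum_add_distrib, Finset.sum_sub_distrib, h1, h2, lhs]
  simp [Finset.mul_sum, Finset.sum_add_distrib]

lemma spectral_gap (N : ℕ) (B : Matrix (Fin N) (Fin N) ℝ)
    (hoff : ∀ i j, i ≠ j → 0 ≤ B i j)
    (hconn : ∀ u v : Fin N, Relation.ReflTransGen (fun x y => x ≠ y ∧ 0 < B y x) u v)
    (w : Fin N → ℝ) (hw : ∀ i, 0 < w i) :
    ∃ lam > 0, ∀ z : Fin N → ℝ, ∑ i, w i * z i = 0 →
      lam * ∑ i, w i * z i ^ 2 ≤ ∑ i, ∑ j, B i j * (z i - z j) ^ 2 := by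
  classical
  set D : (Fin N → ℝ) → ℝ := fun z => ∑ i, ∑ j, B i j * (z i - z j) ^ 2 with hD
  have hterm : ∀ (z : Fin N → ℝ) (i j : Fin N), 0 ≤ B i j * (z i - z j) ^ 2 := by
    intro z i j
    rcases eq_or_ne i j with rfl | h
    · simp
    · exact mul_nonneg (hoff i j h) (sq_nonneg _)
  have hDnonneg : ∀ z, 0 ≤ D z := fun z =>
    Finset.sum_nonneg fun i _ => Finset.sum_nonneg fun j _ => hterm z i j
  -- if D z = 0 and constraint, then z = 0
  have hker : ∀ z : Fin N → ℝ, ∑ i, w i * z i = 0 → D z = 0 → z = 0 := by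
    intro z hcon hz
    have hall : ∀ i j, B i j * (z i - z j) ^ 2 = 0 := by
      have h1 := (Finset.sum_eq_zero_iff_of_nonneg (fun i _ =>
        Finset.sum_nonneg fun j _ => hterm z i j)).mp hz
      intro i j
      have h2 := (Finset.sum_eq_zero_iff_of_nonneg (fun j _ => hterm z i j)).mp
        (h1 i (Finset.mem_univ i))
      exact h2 j (Finset.mem_univ j)
    have hedge : ∀ u v : Fin N, (u ≠ v ∧ 0 < B v u) → z u = z v := by
      intro u v ⟨hne, hpos⟩
      have := hall v u
      have h2 : (z v - z u) ^ 2 = 0 := by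
        by_contra h
        exact h (by nlinarith [sq_nonneg (z v - z u)])
      have := sq_eq_zero_iff.mp h2
      linarith
    have hconst : ∀ u v : Fin N, z u = z v := by
      intro u v
      induction hconn u v with
      | refl => rfl
      | tail _ h ih => exact ih.trans (hedge _ _ h)
    funext i
    by_cases hN : Nonempty (Fin N)
    · haveI := hN
      obtain ⟨i₀⟩ : Nonempty (Fin N) := hN
      have hz0 : ∀ j, z j = z i₀ := fun j => hconst j i₀
      have : ∑ j, w j * z j = (∑ j, w j) * z i₀ := by
        rw [Finset.sum_mul]; exact Finset.sum_congr rfl fun j _ => by rw [hz0 j]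
      rw [this] at hcon
      have hwsum : 0 < ∑ j, w j := Finset.sum_pos (fun j _ => hw j) Finset.univ_nonempty
      have : z i₀ = 0 := by
        rcases mul_eq_zero.mp hcon with h | h
        · linarith
        · exact h
      simp [hz0 i, this]
    · exact absurd ⟨i⟩ hN
  -- compact set
  set K : Set (Fin N → ℝ) := {z | ∑ i, w i * z i = 0 ∧ ∑ i, w i * z i ^ 2 = 1} with hK
  by_cases hKne : K.Nonempty
  · have hKclosed : IsClosed K := by
      have c1 : Continuous fun z : Fin N → ℝ => ∑ i, w i * z i := by fun_prop
      have c2 : Continuous fun z : Fin N → ℝ => ∑ i, w i * z i ^ 2 := by fun_prop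
      exact (isClosed_eq c1 continuous_const).inter (isClosed_eq c2 continuous_const)
    have hKbdd : Bornology.IsBounded K := by
      have : K ⊆ Metric.closedBall 0 (Real.sqrt (∑ i, 1 / w i)) := by
        intro z hz
        rw [Metric.mem_closedBall, dist_zero_right]
        rw [pi_norm_le_iff_of_nonneg (Real.sqrt_nonneg _)]
        intro i
        have hzi : w i * z i ^ 2 ≤ 1 := by
          rw [← hz.2]
          exact Finset.single_le_sum (fun j _ => mul_nonneg (hw j).le (sq_nonneg _))
            (Finset.mem_univ i)
        have h1 : z i ^ 2 ≤ 1 / w i := by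
          rw [le_div_iff₀ (hw i)]; linarith
        have h2 : (1 : ℝ) / w i ≤ ∑ j, 1 / w j :=
          Finset.single_le_sum (f := fun j => 1 / w j) (fun j _ => div_nonneg zero_le_one (hw j).le)
            (Finset.mem_univ i)
        have : |z i| ≤ Real.sqrt (∑ j, 1 / w j) := by
          rw [← Real.sqrt_sq_eq_abs]
          exact Real.sqrt_le_sqrt (by linarith)
        simpa using this
      exact (Metric.isBounded_closedBall).subset this
    have hKcompact : IsCompact K := Metric.isCompact_of_isClosed_isBounded hKclosed hKbdd
    have hDcont : Continuous D := by fun_prop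
    obtain ⟨z₀, hz₀K, hz₀min⟩ := hKcompact.exists_isMinOn hKne hDcont.continuousOn
    have hlam : 0 < D z₀ := by
      rcases lt_or_eq_of_le (hDnonneg z₀) with h | h
      · exact h
      · exfalso
        have h2 := hz₀K.2
        rw [hker z₀ hz₀K.1 h.symm] at h2
        simp at h2
    refine ⟨D z₀, hlam, fun z hz => ?_⟩
    rcases eq_or_ne (∑ i, w i * z i ^ 2) 0 with hE | hE
    · rw [hE, mul_zero]
      exact hDnonneg z
    · have hEpos : 0 < ∑ i, w i * z i ^ 2 :=
        lt_of_le_of_ne (Finset.sum_nonneg fun i _ => mul_nonneg (hw i).le (sq_nonneg _))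
          (Ne.symm hE)
      set c := Real.sqrt (∑ i, w i * z i ^ 2) with hc
      have hcpos : 0 < c := Real.sqrt_pos.mpr hEpos
      have hc2 : c ^ 2 = ∑ i, w i * z i ^ 2 := Real.sq_sqrt hEpos.le
      have hmem : (fun i => z i / c) ∈ K := by
        constructor
        · simp only [mul_div_assoc']
          rw [← Finset.sum_div, hz, zero_div]
        · have : ∑ i, w i * (z i / c) ^ 2 = (∑ i, w i * z i ^ 2) / c ^ 2 := by
            rw [Finset.sum_div]
            exact Finset.sum_congr rfl fun i _ => by rw [div_pow]; ring
          rw [this, ← hc2, div_self (by positivity)]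
      have hmin : D z₀ ≤ D fun i => z i / c := hz₀min hmem
      have hscale : D (fun i => z i / c) = D z / c ^ 2 := by
        simp only [hD]
        rw [Finset.sum_div]
        refine Finset.sum_congr rfl fun i _ => ?_
        rw [Finset.sum_div]
        refine Finset.sum_congr rfl fun j _ => ?_
        rw [div_sub_div_same, div_pow]
        ring
      rw [hscale] at hmin
      have hfin := (le_div_iff₀ (show (0:ℝ) < c ^ 2 by positivity)).mp hmin
      rw [hc2] at hfin
      simpa [hD] using hfin
  · refine ⟨1, one_pos, fun z hz => ?_⟩
    rcases eq_or_ne (∑ i, w i * z i ^ 2) 0 with hE | hE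
    · rw [hE, mul_zero]; exact hDnonneg z
    · exfalso
      have hEpos : 0 < ∑ i, w i * z i ^ 2 :=
        lt_of_le_of_ne (Finset.sum_nonneg fun i _ => mul_nonneg (hw i).le (sq_nonneg _))
          (Ne.symm hE)
      set c := Real.sqrt (∑ i, w i * z i ^ 2) with hc
      have hcpos : 0 < c := Real.sqrt_pos.mpr hEpos
      have hc2 : c ^ 2 = ∑ i, w i * z i ^ 2 := Real.sq_sqrt hEpos.le
      refine hKne ⟨fun i => z i / c, ?_, ?_⟩
      · simp only [mul_div_assoc']
        rw [← Finset.sum_div, hz, zero_div]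
      · have : ∑ i, w i * (z i / c) ^ 2 = (∑ i, w i * z i ^ 2) / c ^ 2 := by
          rw [Finset.sum_div]
          exact Finset.sum_congr rfl fun i _ => by rw [div_pow]; ring
        rw [this, ← hc2, div_self (by positivity)]

theorem exponential_convergence_to_equilibrium_ode
    (N : ℕ) (A : Matrix (Fin N) (Fin N) ℝ)
    (hoff : ∀ i j, i ≠ j → 0 ≤ A i j)
    (hcol : ∀ j, ∑ i, A i j = 0)
    (hconn : ∀ u v : Fin N, Relation.ReflTransGen (fun x y => x ≠ y ∧ 0 < A y x) u v)
    (Xinf : Fin N → ℝ) (hXinf : ∀ i, 0 < Xinf i) (heq : A.mulVec Xinf = 0)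
    (X : ℝ → Fin N → ℝ)
    (hX : ∀ i t, HasDerivAt (fun s => X s i) ((A.mulVec (X t)) i) t)
    (hmass : ∑ i, X 0 i = ∑ i, Xinf i) :
    ∃ lam > 0, ∀ t ≥ (0 : ℝ),
      ∑ i, (X t i - Xinf i) ^ 2 / Xinf i ≤
        Real.exp (-lam * t) * ∑ i, (X 0 i - Xinf i) ^ 2 / Xinf i := by
  classical
  have hXw : ∀ i, Xinf i ≠ 0 := fun i => (hXinf i).ne'
  have hrow : ∀ i, ∑ j, A i j * Xinf j = 0 := by
    intro i
    have := congrFun heq i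
    simpa [Matrix.mulVec, dotProduct] using this
  -- rewrite mulVec in terms of y
  have hAy : ∀ t i, (A.mulVec (X t)) i = ∑ j, A i j * (X t j - Xinf j) := by
    intro t i
    simp only [Matrix.mulVec, dotProduct]
    have : ∑ j, A i j * (X t j - Xinf j)
        = ∑ j, A i j * X t j - ∑ j, A i j * Xinf j := by
      rw [← Finset.sum_sub_distrib]
      exact Finset.sum_congr rfl fun j _ => by ring
    rw [this, hrow, sub_zero]
  -- mass conservation
  have hsum : ∀ t, ∑ i, (X t i - Xinf i) = 0 := by
    intro t
    have hm : ∀ s, HasDerivAt (fun r => ∑ i, X r i) 0 s := by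
      intro s
      have h := HasDerivAt.fun_sum (fun i (_ : i ∈ Finset.univ) => hX i s)
      have hz : ∑ i, (A.mulVec (X s)) i = 0 := by
        simp only [Matrix.mulVec, dotProduct]
        rw [Finset.sum_comm]
        refine Finset.sum_eq_zero fun j _ => ?_
        rw [← Finset.sum_mul, hcol, zero_mul]
      rwa [hz] at h
    have hconst : ∑ i, X t i = ∑ i, X 0 i := by
      exact is_const_of_deriv_eq_zero (fun s => (hm s).differentiableAt)
        (fun s => (hm s).deriv) t 0
    rw [Finset.sum_sub_distrib, hconst, hmass, sub_self]
  -- spectral gap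
  obtain ⟨lam, hlam, hgap⟩ := spectral_gap N (Matrix.of fun i j => A i j * Xinf j)
    (fun i j hij => mul_nonneg (hoff i j hij) (hXinf j).le)
    (fun u v => by
      refine Relation.ReflTransGen.mono ?_ u v (hconn u v)
      exact fun x y ⟨h1, h2⟩ => ⟨h1, mul_pos h2 (hXinf x)⟩)
    Xinf hXinf
  refine ⟨lam, hlam, fun t ht => ?_⟩
  set E : ℝ → ℝ := fun s => ∑ i, (X s i - Xinf i) ^ 2 / Xinf i with hE
  -- derivative of E
  have hE' : ∀ s, HasDerivAt E
      (∑ i, 2 * (X s i - Xinf i) * (∑ j, A i j * (X s j - Xinf j)) / Xinf i) s := by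
    intro s
    refine HasDerivAt.fun_sum fun i _ => ?_
    have h1 := (((hX i s).sub_const (Xinf i)).pow 2).div_const (Xinf i)
    refine h1.congr_deriv ?_
    rw [hAy s i]
    push_cast
    ring
  -- dissipation and gap at each time
  have hkey : ∀ s, (∑ i, 2 * (X s i - Xinf i) * (∑ j, A i j * (X s j - Xinf j)) / Xinf i)
      ≤ -(lam * E s) := by
    intro s
    set y : Fin N → ℝ := fun i => X s i - Xinf i with hy
    have hid := dissipation_identity N A Xinf hXw hrow hcol y
    rw [hid]
    have hcon : ∑ i, Xinf i * (y i / Xinf i) = 0 := by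
      have : ∀ i, Xinf i * (y i / Xinf i) = y i := fun i => mul_div_cancel₀ _ (hXw i)
      simp only [this]
      exact hsum s
    have hgap' := hgap (fun i => y i / Xinf i) hcon
    have hEeq : ∑ i, Xinf i * (y i / Xinf i) ^ 2 = E s := by
      refine Finset.sum_congr rfl fun i _ => ?_
      have := hXw i
      field_simp [hy]
      ring
    rw [hEeq] at hgap'
    simpa using neg_le_neg hgap'
  -- Gronwall
  set F : ℝ → ℝ := fun s => Real.exp (lam * s) * E s with hF
  have hF' : ∀ s, HasDerivAt F
      (lam * Real.exp (lam * s) * E s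
        + Real.exp (lam * s) * (∑ i, 2 * (X s i - Xinf i) * (∑ j, A i j * (X s j - Xinf j)) / Xinf i)) s := by
    intro s
    have hexp : HasDerivAt (fun r => Real.exp (lam * r)) (lam * Real.exp (lam * s)) s := by
      have := (Real.hasDerivAt_exp (lam * s)).comp s ((hasDerivAt_id s).const_mul lam)
      simpa [mul_comm, Function.comp_def] using this
    exact hexp.mul (hE' s)
  have hderiv_nonpos : ∀ s, deriv F s ≤ 0 := by
    intro s
    rw [(hF' s).deriv]
    have h1 := hkey s
    have h2 := Real.exp_pos (lam * s)
    nlinarith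
  have hanti : Antitone F :=
    antitone_of_deriv_nonpos (fun s => (hF' s).differentiableAt) hderiv_nonpos
  have hFt : Real.exp (lam * t) * E t ≤ E 0 := by
    have := hanti ht
    simpa [hF] using this
  have hEt : E t ≤ Real.exp (-lam * t) * E 0 := by
    have h3 : E t = Real.exp (-lam * t) * (Real.exp (lam * t) * E t) := by
      rw [← mul_assoc, ← Real.exp_add]
      simp
    rw [h3]
    exact mul_le_mul_of_nonneg_left hFt (Real.exp_nonneg _)
  simpa [hE] using hEt
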